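/- Let C be a compact subset of [1,2], let Ĉ := {(1/(c−4), c, c/(c−4)) : c ∈ C} ⊆ ℝ³, let S₄ := convexHull ℝ Ĉ, and for i ∈ {1, 2, 3} let Sᵢ := {(i, t, i·t) : t ∈ [1,2]}. Then for any p ∈ ℝ³ and any u ∈ ℝ³ with u ≠ 0, the line {p + t • u : t ∈ ℝ} intersects each of S₁, S₂, S₃, S₄ if and only if there exists c ∈ C such that {p + t • u : t ∈ ℝ} = {(s, c, s·c) : s ∈ ℝ}. In other words, the set of line transversals to {S₁, S₂, S₃, S₄} is exactly {ℓ_c : c ∈ C}, where ℓ_c := {(s, c, s·c) : s ∈ ℝ}. -/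

import Mathlib

private def vec3 (X Y Z : ℝ) : EuclideanSpace ℝ (Fin 3) := WithLp.toLp 2 (fun i => ![X, Y, Z] i)

/-- **Lemma (prescribing the set of line transversals).**
Let `C ⊆ [1,2]` be compact, `Ĉ = {(1/(c−4), c, c/(c−4)) : c ∈ C} ⊆ ℝ³`,
`S₄ = convexHull ℝ Ĉ`, and for `i = 1, 2, 3` let `Sᵢ = {(i, t, i·t) : t ∈ [1,2]}`.
Then a line `{p + t • u : t ∈ ℝ}` (with `u ≠ 0`) intersects each of `S₁, S₂, S₃, S₄`
if and only if it equals `ℓ_c = {(s, c, s·c) : s ∈ ℝ}` for some `c ∈ C`. -/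
theorem transversals_to_four_sets_eq_prescribed_lines
    (C : Set ℝ) (hC : IsCompact C) (hCsub : C ⊆ Set.Icc (1 : ℝ) 2)
    (Chat : Set (EuclideanSpace ℝ (Fin 3)))
    (hChat : Chat = {q | ∃ c ∈ C,
        q 0 = 1 / (c - 4) ∧ q 1 = c ∧ q 2 = c / (c - 4)})
    (S₄ : Set (EuclideanSpace ℝ (Fin 3))) (hS₄ : S₄ = convexHull ℝ Chat)
    (S : ℝ → Set (EuclideanSpace ℝ (Fin 3)))
    (hS : ∀ a : ℝ, S a = {q | ∃ t ∈ Set.Icc (1 : ℝ) 2,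
        q 0 = a ∧ q 1 = t ∧ q 2 = a * t})
    (ℓ : ℝ → Set (EuclideanSpace ℝ (Fin 3)))
    (hℓ : ∀ b : ℝ, ℓ b = {q | ∃ s : ℝ, q 0 = s ∧ q 1 = b ∧ q 2 = s * b})
    (p u : EuclideanSpace ℝ (Fin 3)) (hu : u ≠ 0) :
    ((∃ t : ℝ, p + t • u ∈ S 1) ∧ (∃ t : ℝ, p + t • u ∈ S 2) ∧
        (∃ t : ℝ, p + t • u ∈ S 3) ∧ (∃ t : ℝ, p + t • u ∈ S₄)) ↔
      ∃ c ∈ C, {x : EuclideanSpace ℝ (Fin 3) | ∃ t : ℝ, x = p + t • u} = ℓ c := by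
  have coord : ∀ (t : ℝ) (i : Fin 3), (p + t • u) i = p i + t * u i := fun _ _ => rfl
  constructor
  · rintro ⟨⟨t1, h1⟩, ⟨t2, h2⟩, ⟨t3, h3⟩, ⟨t4, h4⟩⟩
    rw [hS] at h1 h2 h3
    obtain ⟨s1, hs1, hx1, hy1, hz1⟩ := h1
    obtain ⟨s2, hs2, hx2, hy2, hz2⟩ := h2
    obtain ⟨s3, hs3, hx3, hy3, hz3⟩ := h3
    rw [coord] at hx1 hy1 hz1 hx2 hy2 hz2 hx3 hy3 hz3
    have hd1 : (t2 - t1) * u 0 = 1 := by linear_combination hx2 - hx1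
    have hd2 : (t3 - t2) * u 0 = 1 := by linear_combination hx3 - hx2
    have hu0 : u 0 ≠ 0 := by intro h; rw [h, mul_zero] at hd1; exact zero_ne_one hd1
    have hdne : t2 - t1 ≠ 0 := by intro h; rw [h, zero_mul] at hd1; exact zero_ne_one hd1
    have ht3 : t3 = 2 * t2 - t1 := by
      have h := mul_right_cancel₀ hu0 (hd2.trans hd1.symm); linarith
    have A1 : p 2 + t1 * u 2 = p 1 + t1 * u 1 := by linear_combination hz1 - hy1
    have A2 : p 2 + t2 * u 2 = 2 * (p 1 + t2 * u 1) := by linear_combination hz2 - 2 * hy2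
    have A3 : p 2 + t3 * u 2 = 3 * (p 1 + t3 * u 1) := by linear_combination hz3 - 3 * hy3
    rw [ht3] at A3
    have hu1 : u 1 = 0 := by
      have h0 : (2 * (t2 - t1)) * u 1 = 0 := by linear_combination 2 * A2 - A1 - A3
      exact (mul_eq_zero.1 h0).resolve_left (mul_ne_zero two_ne_zero hdne)
    rw [hu1] at A1 A2 hy1
    have hu2 : u 2 = p 1 * u 0 := by
      have h5 : (t2 - t1) * u 2 = p 1 := by linear_combination A2 - A1
      linear_combination u 0 * h5 - u 2 * hd1
    have hp2 : p 2 = p 0 * p 1 := by linear_combination A1 - t1 * hu2 - p 1 * hx1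
    have hb1 : p 1 = s1 := by linarith
    have hbmem : p 1 ∈ Set.Icc (1 : ℝ) 2 := by rw [hb1]; exact hs1
    have hb4 : p 1 - 4 ≠ 0 := by intro h; have := hbmem.2; linarith
    rw [hS₄] at h4
    have hplane : convexHull ℝ Chat ⊆ {q : EuclideanSpace ℝ (Fin 3) | q 2 = 4 * q 0 + 1} := by
      apply convexHull_min
      · rw [hChat]; rintro q ⟨c, hc, hq0, hq1, hq2⟩
        have hc4 : c - 4 ≠ 0 := by have := (hCsub hc).2; intro h; linarith
        simp only [Set.mem_setOf_eq, hq0, hq2]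
        field_simp
        ring
      · intro x hx y hy a a' ha ha' hab
        simp only [Set.mem_setOf_eq] at hx hy ⊢
        have e2 : (a • x + a' • y) 2 = a * x 2 + a' * y 2 := rfl
        have e0 : (a • x + a' • y) 0 = a * x 0 + a' * y 0 := rfl
        rw [e2, e0]
        linear_combination a * hx + a' * hy + hab
    have hP := hplane h4
    simp only [Set.mem_setOf_eq] at hP
    have hP1 : (p + t4 • u) 1 = p 1 := by rw [coord, hu1]; ring
    have hP2' : (p + t4 • u) 2 = p 1 * ((p + t4 • u) 0) := by
      rw [coord, coord, hu2, hp2]; ring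
    have hP0 : (p + t4 • u) 0 * (p 1 - 4) = 1 := by
      rw [hP2'] at hP; linear_combination hP
    have hbC : p 1 ∈ C := by
      by_contra hbn
      have hCne : C.Nonempty := by
        by_contra hc
        rw [Set.not_nonempty_iff_eq_empty] at hc
        have hce : Chat = ∅ := by rw [hChat, hc]; simp
        rw [hce, convexHull_empty] at h4; exact h4
      set k := (p 1 - 4) ^ 2 with hk
      have hcont : ContinuousOn (fun c : ℝ => c + k / (c - 4)) C := by
        apply ContinuousOn.add continuousOn_id
        apply ContinuousOn.div continuousOn_const (by fun_prop)
        intro c hc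
        have := (hCsub hc).2
        intro h; linarith
      obtain ⟨c0, hc0C, hmax⟩ := hC.exists_isMaxOn hCne hcont
      have hc02 : c0 ≤ 2 := (hCsub hc0C).2
      have hc01 : 1 ≤ c0 := (hCsub hc0C).1
      have hc04 : c0 - 4 ≠ 0 := by intro h; linarith
      have hhalf : convexHull ℝ Chat ⊆
          {q : EuclideanSpace ℝ (Fin 3) | q 1 + k * q 0 ≤ c0 + k / (c0 - 4)} := by
        apply convexHull_min
        · rw [hChat]; rintro q ⟨c, hc, hq0, hq1, hq2⟩
          have hc4 : c - 4 ≠ 0 := by have := (hCsub hc).2; intro h; linarith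
          simp only [Set.mem_setOf_eq, hq0, hq1]
          have hle := hmax hc
          simp only [Set.mem_setOf_eq] at hle
          have : k * (1 / (c - 4)) = k / (c - 4) := by ring
          rw [this]
          exact hle
        · intro x hx y hy a a' ha ha' hab
          simp only [Set.mem_setOf_eq] at hx hy ⊢
          have e1 : (a • x + a' • y) 1 = a * x 1 + a' * y 1 := rfl
          have e0 : (a • x + a' • y) 0 = a * x 0 + a' * y 0 := rfl
          rw [e1, e0]
          have h := add_le_add (mul_le_mul_of_nonneg_left hx ha)
            (mul_le_mul_of_nonneg_left hy ha')
          have hM : a * (c0 + k / (c0 - 4)) + a' * (c0 + k / (c0 - 4)) = c0 + k / (c0 - 4) := by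
            linear_combination (c0 + k / (c0 - 4)) * hab
          linarith
      have hPhalf := hhalf h4
      simp only [Set.mem_setOf_eq] at hPhalf
      rw [hP1] at hPhalf
      have hkP0 : k * ((p + t4 • u) 0) = p 1 - 4 := by
        rw [hk]; linear_combination (p 1 - 4) * hP0
      rw [hkP0] at hPhalf
      have hc0b : c0 ≠ p 1 := fun h => hbn (h ▸ hc0C)
      have hgap : c0 + k / (c0 - 4) = (p 1 + (p 1 - 4)) - (p 1 - c0) ^ 2 / (4 - c0) := by
        have h4c : (4:ℝ) - c0 ≠ 0 := by intro h; linarith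
        rw [hk]; field_simp; ring
      have hpos : 0 < (p 1 - c0) ^ 2 / (4 - c0) := by
        have hne : p 1 - c0 ≠ 0 := sub_ne_zero.2 (Ne.symm hc0b)
        have h1 : 0 < (p 1 - c0) ^ 2 := by positivity
        have h2 : (0:ℝ) < 4 - c0 := by linarith
        exact div_pos h1 h2
      linarith
    refine ⟨p 1, hbC, ?_⟩
    rw [hℓ]
    ext x
    simp only [Set.mem_setOf_eq]
    constructor
    · rintro ⟨t, rfl⟩
      refine ⟨p 0 + t * u 0, rfl, ?_, ?_⟩
      · rw [coord, hu1]; ring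
      · rw [coord, hu2, hp2]; ring
    · rintro ⟨s, hx0, hx1, hx2⟩
      refine ⟨(s - p 0) / u 0, PiLp.ext fun i => ?_⟩
      fin_cases i
      · show x 0 = p 0 + (s - p 0) / u 0 * u 0
        rw [hx0]; field_simp; ring
      · show x 1 = p 1 + (s - p 0) / u 0 * u 1
        rw [hx1, hu1]; ring
      · show x 2 = p 2 + (s - p 0) / u 0 * u 2
        rw [hx2, hu2, hp2]; field_simp; ring
  · rintro ⟨c, hcC, hline⟩
    have hc1 : 1 ≤ c := (hCsub hcC).1
    have hc2 : c ≤ 2 := (hCsub hcC).2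
    have hc4 : c - 4 ≠ 0 := by intro h; linarith
    have hmem : ∀ q : EuclideanSpace ℝ (Fin 3), q ∈ ℓ c → ∃ t : ℝ, p + t • u = q := by
      intro q hq
      have hq' : q ∈ {x : EuclideanSpace ℝ (Fin 3) | ∃ t : ℝ, x = p + t • u} := by
        rw [hline]; exact hq
      obtain ⟨t, ht⟩ := hq'
      exact ⟨t, ht.symm⟩
    have hIcc : c ∈ Set.Icc (1:ℝ) 2 := ⟨hc1, hc2⟩
    refine ⟨?_, ?_, ?_, ?_⟩
    · obtain ⟨t, ht⟩ := hmem (vec3 1 c (1 * c)) (by rw [hℓ]; exact ⟨1, rfl, rfl, rfl⟩)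
      exact ⟨t, by rw [hS, ht]; exact ⟨c, hIcc, rfl, rfl, rfl⟩⟩
    · obtain ⟨t, ht⟩ := hmem (vec3 2 c (2 * c)) (by rw [hℓ]; exact ⟨2, rfl, rfl, rfl⟩)
      exact ⟨t, by rw [hS, ht]; exact ⟨c, hIcc, rfl, rfl, rfl⟩⟩
    · obtain ⟨t, ht⟩ := hmem (vec3 3 c (3 * c)) (by rw [hℓ]; exact ⟨3, rfl, rfl, rfl⟩)
      exact ⟨t, by rw [hS, ht]; exact ⟨c, hIcc, rfl, rfl, rfl⟩⟩
    · have hvℓ : vec3 (1 / (c - 4)) c (c / (c - 4)) ∈ ℓ c := by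
        rw [hℓ]
        exact ⟨1 / (c - 4), rfl, rfl, by show c / (c - 4) = 1 / (c - 4) * c; ring⟩
      obtain ⟨t, ht⟩ := hmem _ hvℓ
      refine ⟨t, ?_⟩
      rw [hS₄, ht]
      exact subset_convexHull ℝ Chat (by rw [hChat]; exact ⟨c, hcC, rfl, rfl, rfl⟩)
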